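/- For every graph G in the support of D_r^{MIS} and every maximal independent set Γ of G, at least one of the following holds: (1) Γ ∩ σ(P[U]) is a maximal independent set of the subgraph of G induced on σ(P[U]); (2) Γ ∩ σ(P[V]) is a maximal independent set of the subgraph of G induced on σ(P[V]); here P[U] and P[V] denote the sets of principal vertices of the two half-instances on U and V, and σ is the applied vertex permutation. More generally, this holds for any graph whose vertex set is partitioned into P_U, F_U, P_V, F_V such that the set of edges between P_U ∪ F_U and P_V ∪ F_V is exactly all pairs in F_U × F_V. -/
import Mathlib


/-! ### Graph notions -/

/-- `S` is a maximal independent set of `G`. -/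
def IsMIS {V : Type*} (G : SimpleGraph V) (S : Set V) : Prop :=
  (∀ u ∈ S, ∀ v ∈ S, ¬ G.Adj u v) ∧ ∀ v, v ∉ S → ∃ u ∈ S, G.Adj u v

/-- `S` is a maximal independent set of the subgraph of `G` induced on `A`. -/
def IsMISOn {V : Type*} (G : SimpleGraph V) (A S : Set V) : Prop :=
  S ⊆ A ∧ (∀ u ∈ S, ∀ v ∈ S, ¬ G.Adj u v) ∧ ∀ v ∈ A, v ∉ S → ∃ u ∈ S, G.Adj u v

/-- A finite set of pairwise disjoint (vertex-)pairs. -/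
def IsDisjointPairs {V : Type*} (M : Finset (Sym2 V)) : Prop :=
  (∀ e ∈ M, ¬ e.IsDiag) ∧ ∀ e ∈ M, ∀ f ∈ M, e ≠ f → ∀ v : V, v ∈ e → v ∉ f

/-- The number of pairs of `M` that are actual edges of `G`. -/
noncomputable def matchedCount {V : Type*} (G : SimpleGraph V) (M : Finset (Sym2 V)) : ℝ :=
  ((M : Set (Sym2 V)) ∩ G.edgeSet).ncard

/-- The maximum size of a matching of `G`. -/
noncomputable def matchingNumber {V : Type*} [Fintype V] (G : SimpleGraph V) : ℕ :=
  sSup {m | ∃ M : Finset (Sym2 V),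
    IsDisjointPairs M ∧ (M : Set (Sym2 V)) ⊆ G.edgeSet ∧ M.card = m}


/-- Let `G` be a graph whose vertex set is partitioned into four sets
`PU, FU, PV, FV` (principal/fooling vertices of the two half-instances) such that the
edges between the `U`-side `PU ∪ FU` and the `V`-side `PV ∪ FV` are exactly all pairs in
`FU × FV`.  Then every maximal independent set `Γ` of `G` restricts to a maximal
independent set of the induced subgraph on `PU`, or to one of the induced subgraph on
`PV`.  In particular this holds for every graph in the support of `D_r^MIS`, with
`PU, PV` the principal vertices of the two half-instances (after applying the vertex
permutation `σ`). -/
theorem mis_solve_half {V : Type*} (G : SimpleGraph V) (PU FU PV FV : Set V)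
    (hUnion : PU ∪ FU ∪ PV ∪ FV = Set.univ)
    (h1 : Disjoint PU FU) (h2 : Disjoint PU PV) (h3 : Disjoint PU FV)
    (h4 : Disjoint FU PV) (h5 : Disjoint FU FV) (h6 : Disjoint PV FV)
    (hcross : ∀ u ∈ PU ∪ FU, ∀ v ∈ PV ∪ FV, (G.Adj u v ↔ u ∈ FU ∧ v ∈ FV))
    (Γ : Set V) (hΓ : IsMIS G Γ) :
    IsMISOn G PU (Γ ∩ PU) ∨ IsMISOn G PV (Γ ∩ PV) := by
  obtain ⟨hind, hmax⟩ := hΓ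
  by_cases hFV : ∀ v ∈ FV, v ∉ Γ
  · right
    refine ⟨Set.inter_subset_right, fun u hu v hv => hind u hu.1 v hv.1, ?_⟩
    intro v hv hvΓ
    by_cases hvΓ' : v ∈ Γ
    · exact absurd ⟨hvΓ', hv⟩ hvΓ
    obtain ⟨u, huΓ, hadj⟩ := hmax v hvΓ'
    have huniv : u ∈ PU ∪ FU ∪ PV ∪ FV := hUnion ▸ Set.mem_univ u
    have hu : u ∈ PV := by
      rcases huniv with ((hu | hu) | hu) | hu
      · exact absurd ((hcross u (Or.inl hu) v (Or.inl hv)).mp hadj).2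
          (Set.disjoint_left.mp h6 hv)
      · exact absurd ((hcross u (Or.inr hu) v (Or.inl hv)).mp hadj).2
          (Set.disjoint_left.mp h6 hv)
      · exact hu
      · exact absurd huΓ (hFV u hu)
    exact ⟨u, ⟨huΓ, hu⟩, hadj⟩
  · left
    push_neg at hFV
    obtain ⟨w, hwFV, hwΓ⟩ := hFV
    have hFU : ∀ u ∈ FU, u ∉ Γ := by
      intro u hu huΓ
      exact hind u huΓ w hwΓ ((hcross u (Or.inr hu) w (Or.inr hwFV)).mpr ⟨hu, hwFV⟩)
    refine ⟨Set.inter_subset_right, fun u hu v hv => hind u hu.1 v hv.1, ?_⟩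
    intro v hv hvΓ
    by_cases hvΓ' : v ∈ Γ
    · exact absurd ⟨hvΓ', hv⟩ hvΓ
    obtain ⟨u, huΓ, hadj⟩ := hmax v hvΓ'
    have huniv : u ∈ PU ∪ FU ∪ PV ∪ FV := hUnion ▸ Set.mem_univ u
    have hu : u ∈ PU := by
      rcases huniv with ((hu | hu) | hu) | hu
      · exact hu
      · exact absurd huΓ (hFU u hu)
      · exact absurd ((hcross v (Or.inl hv) u (Or.inl hu)).mp hadj.symm).1
          (Set.disjoint_left.mp h1 hv)
      · exact absurd ((hcross v (Or.inl hv) u (Or.inr hu)).mp hadj.symm).1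
          (Set.disjoint_left.mp h1 hv)
    exact ⟨u, ⟨huΓ, hu⟩, hadj⟩
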